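/- Let n ≥ 4 and let T be a nonempty subset of the set π_n of primes at most n such that Σ_{p∈T} p ≤ n. Then there exists a nonempty subset T' of π_n \ T such that Σ_{p∈T'} p ≤ n and Σ_{p∈T} p + Σ_{p∈T'} p > n. -/

import Mathlib

open Finset

/-- Sum of all primes up to `m`. -/
def PS (m : ℕ) : ℕ := ∑ p ∈ (range (m+1)).filter Nat.Prime, p

/-- The odd primes up to `m`. -/
def Codd (m : ℕ) : Finset ℕ := (range (m+1)).filter (fun p => Nat.Prime p ∧ p ≠ 2)

/-- Sum of the odd primes up to `m`. -/
def QS (m : ℕ) : ℕ := ∑ p ∈ Codd m, p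

/-- The primes up to `m` avoiding `T`. -/
def Cset (T : Finset ℕ) (m : ℕ) : Finset ℕ :=
  (range (m+1)).filter (fun p => Nat.Prime p ∧ p ∉ T)

lemma PS_mono {a b : ℕ} (h : a ≤ b) : PS a ≤ PS b := by
  apply Finset.sum_le_sum_of_subset
  exact Finset.filter_subset_filter _ (Finset.range_subset_range.2 (by omega))

lemma PS_prime {p : ℕ} (hp : p.Prime) : PS p = p + PS (p-1) := by
  have h1 : p - 1 + 1 = p := Nat.succ_pred_eq_of_pos hp.pos
  unfold PS
  rw [h1, range_add_one, filter_insert, if_pos hp, sum_insert (by simp)]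

lemma L1 : ∀ q : ℕ, Nat.Prime q → 7 ≤ q → q + 3 ≤ PS (q - 1) := by
  intro q
  induction q using Nat.strong_induction_on with
  | _ q ih =>
    intro hq h7
    obtain ⟨p, hp, hpgt, hple⟩ := Nat.exists_prime_lt_and_le_two_mul ((q-1)/2) (by omega)
    have hodd : q % 2 = 1 := Nat.odd_iff.mp (hq.odd_of_ne_two (by omega))
    have hS : p + PS (p-1) ≤ PS (q-1) := by
      rw [← PS_prime hp]; exact PS_mono (by omega)
    by_cases h7p : 7 ≤ p
    · have := ih p (by omega) hp h7p
      omega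
    · have hq9 : q ≤ 11 := by omega
      interval_cases q <;> simp_all <;> decide

lemma L1b : ∀ q : ℕ, Nat.Prime q → 11 ≤ q → q + 6 ≤ PS (q - 1) := by
  intro q
  induction q using Nat.strong_induction_on with
  | _ q ih =>
    intro hq h11
    obtain ⟨p, hp, hpgt, hple⟩ := Nat.exists_prime_lt_and_le_two_mul ((q-1)/2) (by omega)
    have hodd : q % 2 = 1 := Nat.odd_iff.mp (hq.odd_of_ne_two (by omega))
    have hS : p + PS (p-1) ≤ PS (q-1) := by
      rw [← PS_prime hp]; exact PS_mono (by omega)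
    by_cases h11p : 11 ≤ p
    · have := ih p (by omega) hp h11p
      omega
    · have hq13 : q ≤ 19 := by omega
      interval_cases q <;> simp_all <;> decide

lemma L2 : ∀ m : ℕ, 5 ≤ m → m + 4 ≤ PS m := by
  intro m
  induction m using Nat.strong_induction_on with
  | _ m ih =>
    intro h5
    by_cases h10 : m ≤ 9
    · interval_cases m <;> decide
    · obtain ⟨p, hp, hpgt, hple⟩ := Nat.exists_prime_lt_and_le_two_mul (m/2) (by omega)
      have h1 : m/2 + 4 ≤ PS (m/2) := ih (m/2) (by omega) (by omega)
      have hS : p + PS (p-1) ≤ PS m := by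
        rw [← PS_prime hp]; exact PS_mono (by omega)
      have hS2 : PS (m/2) ≤ PS (p-1) := PS_mono (by omega)
      omega

lemma PS_eq_QS {m : ℕ} (h : 2 ≤ m) : PS m = 2 + QS m := by
  unfold PS QS Codd
  rw [← Finset.sum_filter_add_sum_filter_not ((range (m+1)).filter Nat.Prime) (fun p => p = 2)]
  congr 1
  · rw [Finset.filter_filter]
    have h2 : (range (m+1)).filter (fun p => Nat.Prime p ∧ p = 2) = {2} := by
      ext a
      simp only [mem_filter, mem_range, mem_singleton]
      constructor
      · rintro ⟨_, _, rfl⟩; rfl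
      · rintro rfl; exact ⟨by omega, by norm_num⟩
    rw [h2]; simp
  · rw [Finset.filter_filter]

/-- Key lemma for `T = {2}`: subset sums of the odd primes up to `m` contain an
element of `{t-1, t}` whenever `3 ≤ t ≤ QS m` and `t + 1 ≠ QS m`. -/
lemma Qlem : ∀ m t : ℕ, 3 ≤ t → t ≤ QS m → t + 1 ≠ QS m →
    ∃ V ⊆ Codd m, t ≤ (∑ p ∈ V, p) + 1 ∧ (∑ p ∈ V, p) ≤ t := by
  intro m
  induction m using Nat.strong_induction_on with
  | _ m ih =>
    rcases m with _ | k
    · intro t h3 hle _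
      have : QS 0 = 0 := by decide
      omega
    · intro t h3 hle hne
      have hsplit : Codd (k+1) =
          if Nat.Prime (k+1) ∧ (k+1) ≠ 2 then insert (k+1) (Codd k) else Codd k := by
        unfold Codd; rw [range_add_one, filter_insert]
      by_cases hq : Nat.Prime (k+1) ∧ (k+1) ≠ 2
      · rw [if_pos hq] at hsplit
        have hnotmem : (k+1) ∉ Codd k := by
          intro h
          have := (mem_filter.mp h).1
          simp [mem_range] at this
        have hQS : QS (k+1) = (k+1) + QS k := by
          unfold QS; rw [hsplit, sum_insert hnotmem]
        have hkey7 : 7 ≤ k+1 → (k+1) + 1 ≤ QS k := by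
          intro h7
          have h1 := L1 (k+1) hq.1 h7
          have h2 : PS (k+1-1) = 2 + QS (k+1-1) := PS_eq_QS (by omega)
          simp only [Nat.add_sub_cancel] at h1 h2
          omega
        have hkey11 : 11 ≤ k+1 → (k+1) + 4 ≤ QS k := by
          intro h11
          have h1 := L1b (k+1) hq.1 h11
          have h2 : PS (k+1-1) = 2 + QS (k+1-1) := PS_eq_QS (by omega)
          simp only [Nat.add_sub_cancel] at h1 h2
          omega
        have hsmall : k+1 = 3 ∨ k+1 = 5 ∨ k+1 = 7 ∨ 11 ≤ k+1 := by
          have h2 := hq.1.two_le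
          by_cases h11 : 11 ≤ k + 1
          · tauto
          · have hk : k ≤ 9 := by omega
            interval_cases k <;>
              first
                | omega
                | exact absurd hq.1 (by decide)
                | exact absurd rfl hq.2
        have hs3 : k+1 = 3 → QS k = 0 := by
          intro h; have hk : k = 2 := by omega
          rw [hk]; decide
        have hs5 : k+1 = 5 → QS k = 3 := by
          intro h; have hk : k = 4 := by omega
          rw [hk]; decide
        have hs7 : k+1 = 7 → QS k = 8 := by
          intro h; have hk : k = 6 := by omega
          rw [hk]; decide
        by_cases hA : t ≤ QS k ∧ t + 1 ≠ QS k
        · obtain ⟨V, hV, h1, h2⟩ := ih k (by omega) t h3 hA.1 hA.2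
          exact ⟨V, hV.trans (hsplit ▸ subset_insert _ _), h1, h2⟩
        · by_cases hB : k+1 ≤ t ∧ t ≤ k+2
          · refine ⟨{k+1}, ?_, ?_, ?_⟩
            · rw [hsplit]; simp
            · rw [sum_singleton]; omega
            · rw [sum_singleton]; omega
          · by_cases hC : t = QS k + 1
            · have hQk : ∑ p ∈ Codd k, p = QS k := rfl
              exact ⟨Codd k, hsplit ▸ subset_insert _ _, by omega, by omega⟩
            · by_cases hD : k+1+3 ≤ t
              · obtain ⟨V, hV, h1, h2⟩ := ih k (by omega) (t - (k+1)) (by omega)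
                  (by omega) (by omega)
                refine ⟨insert (k+1) V, ?_, ?_, ?_⟩
                · rw [hsplit]; exact insert_subset_insert _ hV
                · rw [sum_insert (fun hm => hnotmem (hV hm))]; omega
                · rw [sum_insert (fun hm => hnotmem (hV hm))]; omega
              · exfalso
                rcases hsmall with h|h|h|h
                · have := hs3 h; omega
                · have := hs5 h; omega
                · have := hkey7 (by omega); have := hs7 h; omega
                · have := hkey11 h; omega
      · rw [if_neg hq] at hsplit
        have hQS : QS (k+1) = QS k := by unfold QS; rw [hsplit]
        obtain ⟨V, hV, h1, h2⟩ := ih k (by omega) t h3 (by omega) (by omega)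
        exact ⟨V, hsplit ▸ hV, h1, h2⟩

lemma PS_split (T : Finset ℕ) (m : ℕ) :
    PS m = (∑ p ∈ (range (m+1)).filter (fun p => Nat.Prime p ∧ p ∈ T), p)
      + ∑ p ∈ Cset T m, p := by
  unfold PS Cset
  rw [← Finset.sum_filter_add_sum_filter_not ((range (m+1)).filter Nat.Prime) (fun p => p ∈ T)]
  congr 1 <;> rw [Finset.filter_filter]

lemma sum_T_filter_le (T : Finset ℕ) (m : ℕ) :
    (∑ p ∈ (range (m+1)).filter (fun p => Nat.Prime p ∧ p ∈ T), p) ≤ ∑ p ∈ T, p := by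
  apply Finset.sum_le_sum_of_subset
  intro a ha
  exact (mem_filter.mp ha).2.2

/-- The Richert-style gap lemma: if `ΣT ≥ 3`, then the subset sums of the primes up to `m`
avoiding `T` meet every window `(x, x + ΣT]` with `x + 4 ≤ Σ (Cset T m)`. -/
lemma gapLemma : ∀ m : ℕ, ∀ (T : Finset ℕ) (x : ℕ), 3 ≤ ∑ p ∈ T, p →
    x + 4 ≤ ∑ p ∈ Cset T m, p →
    ∃ V ⊆ Cset T m, x < ∑ p ∈ V, p ∧ ∑ p ∈ V, p ≤ x + ∑ p ∈ T, p := by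
  intro m
  induction m using Nat.strong_induction_on with
  | _ m ih =>
    rcases m with _ | k
    · intro T x _ hx
      have h0 : Cset T 0 = ∅ := by
        ext a
        simp only [Cset, mem_filter, mem_range, Finset.notMem_empty, iff_false, not_and]
        intro h hp
        exact absurd hp.two_le (by omega)
      rw [h0] at hx
      simp at hx
    · intro T x hP hx
      have hsplit : Cset T (k+1) =
          if Nat.Prime (k+1) ∧ (k+1) ∉ T then insert (k+1) (Cset T k) else Cset T k := by
        unfold Cset; rw [range_add_one, filter_insert]
      by_cases hq : Nat.Prime (k+1) ∧ (k+1) ∉ T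
      · rw [if_pos hq] at hsplit
        have hnotmem : (k+1) ∉ Cset T k := by
          intro h
          have := (mem_filter.mp h).1
          simp [mem_range] at this
        have hCS : ∑ p ∈ Cset T (k+1), p = (k+1) + ∑ p ∈ Cset T k, p := by
          rw [hsplit, sum_insert hnotmem]
        have hqmem : (k+1) ∈ Cset T (k+1) := by
          rw [hsplit]; exact mem_insert_self _ _
        by_cases h1 : x + 4 ≤ ∑ p ∈ Cset T k, p
        · obtain ⟨V, hV, ha, hb⟩ := ih k (by omega) T x hP h1
          exact ⟨V, hV.trans (hsplit ▸ subset_insert _ _), ha, hb⟩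
        · by_cases h2 : k+1 ≤ x
          · obtain ⟨V, hV, ha, hb⟩ := ih k (by omega) T (x - (k+1)) hP (by omega)
            refine ⟨insert (k+1) V, ?_, ?_, ?_⟩
            · rw [hsplit]; exact insert_subset_insert _ hV
            · rw [sum_insert (fun hm => hnotmem (hV hm))]; omega
            · rw [sum_insert (fun hm => hnotmem (hV hm))]; omega
          · by_cases h7 : 7 ≤ k+1
            · have hL := L1 (k+1) hq.1 h7
              have hsp := PS_split T k
              have hf := sum_T_filter_le T k
              simp only [Nat.add_sub_cancel] at hL
              refine ⟨{k+1}, by simpa using hqmem, ?_, ?_⟩ <;> rw [sum_singleton] <;> omega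
            · have hk5 : k+1 = 2 ∨ k+1 = 3 ∨ k+1 = 5 := by
                have := hq.1.two_le
                have hk6 : k ≤ 5 := by omega
                interval_cases k <;> first | omega | exact absurd hq.1 (by decide)
              rcases hk5 with h|h|h
              · exfalso
                have hk : k = 1 := by omega
                subst hk
                have h0 : Cset T 1 = ∅ := by
                  ext a
                  simp only [Cset, mem_filter, mem_range, Finset.notMem_empty, iff_false,
                    not_and]
                  intro ha hp
                  exact absurd hp.two_le (by omega)
                rw [h0] at hCS
                simp only [Finset.sum_empty] at hCS
                omega
              · refine ⟨{k+1}, by simpa using hqmem, ?_, ?_⟩ <;> rw [sum_singleton] <;> omega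
              · by_cases hx1 : 2 ≤ x
                · refine ⟨{k+1}, by simpa using hqmem, ?_, ?_⟩ <;> rw [sum_singleton] <;> omega
                · by_cases h2T : 2 ∈ T
                  · by_cases h3T : 3 ∈ T
                    · have hsub : ({2,3} : Finset ℕ) ⊆ T := by
                        intro a ha
                        simp only [mem_insert, mem_singleton] at ha
                        rcases ha with rfl|rfl <;> assumption
                      have h5T : 5 ≤ ∑ p ∈ T, p := by
                        calc (5:ℕ) = ∑ p ∈ ({2,3} : Finset ℕ), p := by decide
                        _ ≤ _ := sum_le_sum_of_subset hsub
                      refine ⟨{k+1}, by simpa using hqmem, ?_, ?_⟩ <;>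
                        rw [sum_singleton] <;> omega
                    · have h3mem : 3 ∈ Cset T (k+1) := by
                        unfold Cset
                        rw [mem_filter]
                        exact ⟨mem_range.mpr (by omega), by norm_num, h3T⟩
                      refine ⟨{3}, by simpa using h3mem, ?_, ?_⟩ <;>
                        rw [sum_singleton] <;> omega
                  · have h2mem : 2 ∈ Cset T (k+1) := by
                      unfold Cset
                      rw [mem_filter]
                      exact ⟨mem_range.mpr (by omega), by norm_num, h2T⟩
                    refine ⟨{2}, by simpa using h2mem, ?_, ?_⟩ <;>
                      rw [sum_singleton] <;> omega
      · rw [if_neg hq] at hsplit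
        have hCS : ∑ p ∈ Cset T (k+1), p = ∑ p ∈ Cset T k, p := by rw [hsplit]
        obtain ⟨V, hV, ha, hb⟩ := ih k (by omega) T x hP (by omega)
        exact ⟨V, hsplit ▸ hV, ha, hb⟩

/-- For `n ≥ 4` and a nonempty set `T` of primes at most `n` with sum at most `n`, there
is a nonempty set `T'` of primes at most `n`, disjoint from `T`, with sum at most `n`,
such that the two sums together exceed `n`. -/
theorem exists_disjoint_prime_subset_sum (n : ℕ) (hn : 4 ≤ n) (T : Finset ℕ)
    (hT : T.Nonempty) (hTprime : ∀ p ∈ T, p.Prime ∧ p ≤ n) (hTsum : ∑ p ∈ T, p ≤ n) :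
    ∃ T' : Finset ℕ, T'.Nonempty ∧ (∀ p ∈ T', p.Prime ∧ p ≤ n) ∧ Disjoint T T' ∧
      (∑ p ∈ T', p) ≤ n ∧ n < (∑ p ∈ T, p) + ∑ p ∈ T', p := by
  -- basic facts
  obtain ⟨a, haT⟩ := hT
  have ha2 := (hTprime a haT).1.two_le
  have haSum : a ≤ ∑ p ∈ T, p := Finset.single_le_sum (fun i _ => Nat.zero_le i) haT
  rcases Nat.lt_or_ge n 5 with h4 | h5
  · -- n = 4
    have hn4 : n = 4 := by omega
    subst hn4
    have hsub : ∀ p ∈ T, p = 2 ∨ p = 3 := by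
      intro p hp
      obtain ⟨hpp, hple⟩ := hTprime p hp
      have := hpp.two_le
      interval_cases p
      · left; rfl
      · right; rfl
      · exact absurd hpp (by decide)
    by_cases h2 : 2 ∈ T <;> by_cases h3 : 3 ∈ T
    · exfalso
      have hsubT : ({2,3} : Finset ℕ) ⊆ T := by
        intro b hb
        simp only [mem_insert, mem_singleton] at hb
        rcases hb with rfl|rfl <;> assumption
      have : (5:ℕ) ≤ ∑ p ∈ T, p := by
        calc (5:ℕ) = ∑ p ∈ ({2,3} : Finset ℕ), p := by decide
        _ ≤ _ := sum_le_sum_of_subset hsubT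
      omega
    · -- T = {2}
      have hT2 : T = {2} := by
        apply subset_antisymm
        · intro p hp
          rcases hsub p hp with rfl|rfl
          · simp
          · exact absurd hp h3
        · simpa using h2
      refine ⟨{3}, ⟨3, by simp⟩, ?_, ?_, ?_, ?_⟩
      · intro p hp
        simp only [mem_singleton] at hp
        subst hp
        exact ⟨by norm_num, by omega⟩
      · rw [hT2]; simp
      · simp
      · rw [hT2]; simp
    · -- T = {3}
      have hT3 : T = {3} := by
        apply subset_antisymm
        · intro p hp
          rcases hsub p hp with rfl|rfl
          · exact absurd hp h2
          · simp
        · simpa using h3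
      refine ⟨{2}, ⟨2, by simp⟩, ?_, ?_, ?_, ?_⟩
      · intro p hp
        simp only [mem_singleton] at hp
        subst hp
        exact ⟨by norm_num, by omega⟩
      · rw [hT3]; simp
      · simp
      · rw [hT3]; simp
    · exfalso
      rcases hsub a haT with rfl|rfl
      · exact h2 haT
      · exact h3 haT
  · -- n ≥ 5
    by_cases hP3 : 3 ≤ ∑ p ∈ T, p
    · -- general case via gapLemma
      have hL2 := L2 n h5
      have hsp := PS_split T n
      have hTeq : (range (n+1)).filter (fun p => Nat.Prime p ∧ p ∈ T) = T := by
        ext b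
        simp only [mem_filter, mem_range]
        constructor
        · tauto
        · intro hb
          exact ⟨by have := (hTprime b hb).2; omega, (hTprime b hb).1, hb⟩
      rw [hTeq] at hsp
      obtain ⟨V, hV, ha', hb'⟩ := gapLemma n T (n - ∑ p ∈ T, p) hP3 (by omega)
      refine ⟨V, ?_, ?_, ?_, ?_, ?_⟩
      · rcases V.eq_empty_or_nonempty with rfl | hne
        · exfalso; simp at ha'
        · exact hne
      · intro p hp
        have hm := mem_filter.mp (hV hp)
        exact ⟨hm.2.1, by have := mem_range.mp hm.1; omega⟩
      · rw [Finset.disjoint_right]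
        intro p hp
        exact (mem_filter.mp (hV hp)).2.2
      · omega
      · omega
    · -- ΣT = 2, so T = {2}
      have hP2 : ∑ p ∈ T, p = 2 := by omega
      have haa : a = 2 := by omega
      subst haa
      have hT2 : T = {2} := by
        have hers : ∑ p ∈ T.erase 2, p = 0 := by
          have h : 2 + ∑ p ∈ T.erase 2, p = ∑ p ∈ T, p :=
            Finset.add_sum_erase T (fun p => p) haT
          omega
        have hempty : T.erase 2 = ∅ := by
          by_contra hne
          obtain ⟨b, hb⟩ := Finset.nonempty_of_ne_empty hne
          have hbT := Finset.mem_of_mem_erase hb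
          have hb2 := (hTprime b hbT).1.two_le
          have : b ≤ ∑ p ∈ T.erase 2, p :=
            Finset.single_le_sum (fun i _ => Nat.zero_le i) hb
          omega
        have hie := Finset.insert_erase haT
        rw [hempty] at hie
        simpa using hie.symm
      -- apply the odd-primes lemma
      have hL2 := L2 n h5
      have hps : PS n = 2 + QS n := PS_eq_QS (by omega)
      obtain ⟨V, hV, ha', hb'⟩ := Qlem n n (by omega) (by omega) (by omega)
      refine ⟨V, ?_, ?_, ?_, ?_, ?_⟩
      · rcases V.eq_empty_or_nonempty with rfl | hne
        · exfalso; simp at ha'; omega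
        · exact hne
      · intro p hp
        have hm := mem_filter.mp (hV hp)
        exact ⟨hm.2.1, by have := mem_range.mp hm.1; omega⟩
      · rw [hT2, Finset.disjoint_singleton_left]
        intro h
        exact (mem_filter.mp (hV h)).2.2 rfl
      · exact hb'
      · omega
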